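/- (Isham–Linden–Schreckenberg theorem, uniqueness direction.) Let n ≥ 1 and let 𝔛, 𝔛′ be matrices indexed by (Fin n × Fin n) × (Fin n × Fin n) with complex entries. If tr((p ⊗ q) 𝔛) = tr((p ⊗ q) 𝔛′) for all projection matrices p, q in M_n(ℂ), then 𝔛 = 𝔛′. -/

import Mathlib

open Matrix

lemma stdBasis_herm {n : ℕ} (u v : Fin n) (z : ℂ) :
    (single u v z)ᴴ = single v u (star z) := by
  ext x y
  by_cases h1 : u = y <;> by_cases h2 : v = x <;>
    simp [conjTranspose_apply, single, h1, h2, and_comm]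

lemma stdBasis_mem_span {n : ℕ} (i j : Fin n) :
    single i j (1:ℂ) ∈
      Submodule.span ℂ {p : Matrix (Fin n) (Fin n) ℂ | p.IsHermitian ∧ p * p = p} := by
  have hdiag : ∀ u : Fin n, (single u u (1:ℂ)).IsHermitian ∧
      single u u (1:ℂ) * single u u 1 = single u u 1 := by
    intro u
    exact ⟨by simp [IsHermitian, stdBasis_herm], by simp⟩
  by_cases hij : i = j
  · subst hij; exact Submodule.subset_span (hdiag i)
  · have hijne : i ≠ j := hij
    set a := single i i (1:ℂ) with ha_def
    set b := single i j (1:ℂ) with hb_def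
    set c := single j i (1:ℂ) with hc_def
    set d := single j j (1:ℂ) with hd_def
    have maa : a * a = a := by simp [ha_def]
    have mab : a * b = b := by simp [ha_def, hb_def]
    have mac : a * c = 0 := single_mul_single_of_ne (c := 1) i i _ hijne 1
    have mad : a * d = 0 := single_mul_single_of_ne (c := 1) i i _ hijne 1
    have mba : b * a = 0 := single_mul_single_of_ne (c := 1) i j _ hijne.symm 1
    have mbb : b * b = 0 := single_mul_single_of_ne (c := 1) i j _ hijne.symm 1
    have mbc : b * c = a := by simp [hb_def, hc_def, ha_def]
    have mbd : b * d = b := by simp [hb_def, hd_def]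
    have mca : c * a = c := by simp [hc_def, ha_def]
    have mcb : c * b = d := by simp [hc_def, hb_def, hd_def]
    have mcc : c * c = 0 := single_mul_single_of_ne (c := 1) j i _ hijne 1
    have mcd : c * d = 0 := single_mul_single_of_ne (c := 1) j i _ hijne 1
    have mda : d * a = 0 := single_mul_single_of_ne (c := 1) j j _ hijne.symm 1
    have mdb : d * b = 0 := single_mul_single_of_ne (c := 1) j j _ hijne.symm 1
    have mdc : d * c = c := by simp [hd_def, hc_def]
    have mdd : d * d = d := by simp [hd_def]
    have hP2 : ((1/2 : ℂ) • (a + b + c + d)).IsHermitian ∧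
        ((1/2 : ℂ) • (a + b + c + d)) * ((1/2 : ℂ) • (a + b + c + d))
          = (1/2 : ℂ) • (a + b + c + d) := by
      constructor
      · have : (a + b + c + d)ᴴ = a + b + c + d := by
          simp only [conjTranspose_add, ha_def, hb_def, hc_def, hd_def, stdBasis_herm, star_one]
          abel
        simp only [IsHermitian, conjTranspose_smul, this]
        congr 1
        simp [Complex.ext_iff]
      · rw [Matrix.smul_mul, Matrix.mul_smul, smul_smul]
        have hM : (a + b + c + d) * (a + b + c + d) = (2:ℂ) • (a + b + c + d) := by
          simp only [add_mul, mul_add, maa, mab, mac, mad, mba, mbb, mbc, mbd,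
            mca, mcb, mcc, mcd, mda, mdb, mdc, mdd]
          module
        rw [hM, smul_smul]
        norm_num
    have hP3 : ((1/2 : ℂ) • (a + Complex.I • b + (-Complex.I) • c + d)).IsHermitian ∧
        ((1/2 : ℂ) • (a + Complex.I • b + (-Complex.I) • c + d)) *
          ((1/2 : ℂ) • (a + Complex.I • b + (-Complex.I) • c + d))
          = (1/2 : ℂ) • (a + Complex.I • b + (-Complex.I) • c + d) := by
      constructor
      · have : (a + Complex.I • b + (-Complex.I) • c + d)ᴴ
            = a + Complex.I • b + (-Complex.I) • c + d := by
          simp only [conjTranspose_add, conjTranspose_smul, ha_def, hb_def, hc_def, hd_def,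
            stdBasis_herm, star_one, Complex.star_def, map_neg, Complex.conj_I]
          module
        simp only [IsHermitian, conjTranspose_smul, this]
        congr 1
        simp [Complex.ext_iff]
      · rw [Matrix.smul_mul, Matrix.mul_smul, smul_smul]
        have hM : (a + Complex.I • b + (-Complex.I) • c + d) *
            (a + Complex.I • b + (-Complex.I) • c + d)
            = (2:ℂ) • (a + Complex.I • b + (-Complex.I) • c + d) := by
          simp only [add_mul, mul_add, Matrix.smul_mul, Matrix.mul_smul, smul_smul,
            maa, mab, mac, mad, mba, mbb, mbc, mbd, mca, mcb, mcc, mcd, mda, mdb, mdc, mdd,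
            smul_zero, neg_mul, mul_neg, Complex.I_mul_I, neg_neg, one_smul, neg_smul]
          match_scalars <;>
            first
              | ring
              | linear_combination (-(1:ℂ)) * Complex.I_sq
              | linear_combination (1:ℂ) * Complex.I_sq
        rw [hM, smul_smul]
        norm_num
    have key : b = ((1/2 : ℂ) • (a + b + c + d))
        - Complex.I • ((1/2 : ℂ) • (a + Complex.I • b + (-Complex.I) • c + d))
        - ((1 - Complex.I)/2) • a - ((1 - Complex.I)/2) • d := by
      match_scalars
      · linear_combination ((1:ℂ)/2) * Complex.I_sq
      · ring
      · linear_combination (-(1:ℂ)/2) * Complex.I_sq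
      · ring
    rw [key]
    exact Submodule.sub_mem _ (Submodule.sub_mem _ (Submodule.sub_mem _
      (Submodule.subset_span hP2) (Submodule.smul_mem _ _ (Submodule.subset_span hP3)))
      (Submodule.smul_mem _ _ (Submodule.subset_span (hdiag i))))
      (Submodule.smul_mem _ _ (Submodule.subset_span (hdiag j)))

lemma mem_span_proj {n : ℕ} (A : Matrix (Fin n) (Fin n) ℂ) :
    A ∈ Submodule.span ℂ {p : Matrix (Fin n) (Fin n) ℂ | p.IsHermitian ∧ p * p = p} := by
  rw [matrix_eq_sum_single A]
  refine Submodule.sum_mem _ fun i _ => Submodule.sum_mem _ fun j _ => ?_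
  rw [show single i j (A i j) = (A i j) • single i j (1:ℂ) by
    rw [Matrix.smul_single, smul_eq_mul, mul_one]]
  exact Submodule.smul_mem _ _ (stdBasis_mem_span i j)

open scoped Kronecker

lemma trace_kron_std {n : ℕ} (X : Matrix (Fin n × Fin n) (Fin n × Fin n) ℂ)
    (i k j l : Fin n) :
    ((single i k (1:ℂ) ⊗ₖ single j l (1:ℂ)) * X).trace
      = X (k,l) (i,j) := by
  simp [Matrix.trace, Matrix.mul_apply, Matrix.diag, kroneckerMap_apply,
    single, Fintype.sum_prod_type, ite_and, Finset.sum_ite_eq, Finset.sum_ite_eq']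

/-- Isham–Linden–Schreckenberg theorem, uniqueness direction. The
representing matrix of a decoherence functional on `M_n(ℂ)` is uniquely determined
by its values `tr((p ⊗ q) X)` on pairs of projection matrices. -/
theorem ILS_uniqueness {n : ℕ} (hn : 1 ≤ n)
    (X X' : Matrix (Fin n × Fin n) (Fin n × Fin n) ℂ)
    (h : ∀ p q : Matrix (Fin n) (Fin n) ℂ, p.IsHermitian → p * p = p →
      q.IsHermitian → q * q = q →
      ((p ⊗ₖ q) * X).trace = ((p ⊗ₖ q) * X').trace) :
    X = X' := by
  have key : ∀ A B : Matrix (Fin n) (Fin n) ℂ,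
      ((A ⊗ₖ B) * X).trace = ((A ⊗ₖ B) * X').trace := by
    intro A B
    induction mem_span_proj A using Submodule.span_induction with
    | mem p hp =>
      induction mem_span_proj B using Submodule.span_induction with
      | mem q hq => exact h p q hp.1 hp.2 hq.1 hq.2
      | zero => simp [Matrix.kroneckerMap_zero_right]
      | add q r _ _ hq hr => simp [Matrix.kronecker_add, Matrix.add_mul, trace_add, hq, hr]
      | smul t q _ hq => simp [Matrix.kronecker_smul, Matrix.smul_mul, trace_smul, hq]
    | zero => simp [Matrix.kroneckerMap_zero_left]
    | add p r _ _ hp hr => simp [Matrix.add_kronecker, Matrix.add_mul, trace_add, hp, hr]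
    | smul t p _ hp => simp [Matrix.smul_kronecker, Matrix.smul_mul, trace_smul, hp]
  ext u v
  obtain ⟨u1, u2⟩ := u
  obtain ⟨v1, v2⟩ := v
  have := key (single v1 u1 1) (single v2 u2 1)
  rwa [trace_kron_std, trace_kron_std] at this
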